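/- For every odd integer n ≥ 3, the independence number of the prime-coprime graph of the dicyclic group Q_{4n} of order 4n equals 2n. -/

import Mathlib

/-- The prime-coprime graph: distinct vertices `g, h` are adjacent iff
`gcd (orderOf g) (orderOf h)` is `1` or a prime. -/
def primeCoprimeGraph (G : Type*) [Monoid G] : SimpleGraph G where
  Adj g h := g ≠ h ∧
    (Nat.gcd (orderOf g) (orderOf h) = 1 ∨ (Nat.gcd (orderOf g) (orderOf h)).Prime)
  symm := by
    constructor
    rintro g h ⟨hne, hd⟩
    exact ⟨hne.symm, by rwa [Nat.gcd_comm]⟩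
  loopless := by constructor; rintro g ⟨hne, -⟩; exact hne rfl

/-- A set of vertices is independent if no two of its elements are adjacent. -/
def IsIndepSet {V : Type*} (Γ : SimpleGraph V) (s : Set V) : Prop :=
  s.Pairwise fun a b => ¬ Γ.Adj a b

open scoped Classical in
/-- The independence number of a graph on a finite vertex set. -/
noncomputable def indepNum {V : Type*} [Fintype V] (Γ : SimpleGraph V) : ℕ :=
  Finset.univ.sup fun s : Finset V => if IsIndepSet Γ (s : Set V) then s.card else 0

/-- A graph is split if its vertex set can be partitioned into two disjoint nonempty
subsets, one a clique and the other an independent set. -/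
def IsSplit {V : Type*} (Γ : SimpleGraph V) : Prop :=
  ∃ K I : Set V, K.Nonempty ∧ I.Nonempty ∧ Disjoint K I ∧ K ∪ I = Set.univ ∧
    Γ.IsClique K ∧ IsIndepSet Γ I

open QuaternionGroup in
theorem indepNum_dicyclic_odd (n : ℕ) [NeZero n] (hn : 3 ≤ n) (hodd : Odd n) :
    indepNum (primeCoprimeGraph (QuaternionGroup n)) = 2 * n := by
  classical
  have hcard : Fintype.card (ZMod (2 * n)) = 2 * n := ZMod.card _
  -- order of a i divides 2n
  have hdvd : ∀ i : ZMod (2 * n), orderOf (a i : QuaternionGroup n) ∣ 2 * n := by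
    intro i
    rw [QuaternionGroup.orderOf_a]
    exact Nat.div_dvd_of_dvd (Nat.gcd_dvd_left _ _)
  -- a i and xa j are always adjacent
  have hadj : ∀ i j : ZMod (2 * n),
      (primeCoprimeGraph (QuaternionGroup n)).Adj (a i) (xa j) := by
    intro i j
    refine ⟨by simp, ?_⟩
    rw [QuaternionGroup.orderOf_xa]
    set d := orderOf (a i : QuaternionGroup n) with hd
    have hg4 : Nat.gcd d 4 ∣ 4 := Nat.gcd_dvd_right _ _
    have hgd : Nat.gcd d 4 ∣ d := Nat.gcd_dvd_left _ _
    have hne4 : Nat.gcd d 4 ≠ 4 := by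
      intro h
      have h4 : 4 ∣ 2 * n := (h ▸ hgd).trans (hdvd i)
      obtain ⟨k, hk⟩ := h4
      have : n = 2 * k := by omega
      have := Nat.odd_iff.mp hodd
      omega
    have hle : Nat.gcd d 4 ≤ 4 := Nat.le_of_dvd (by norm_num) hg4
    interval_cases h : Nat.gcd d 4
    · exact absurd (Nat.eq_zero_of_gcd_eq_zero_right h) (by norm_num)
    · exact Or.inl rfl
    · exact Or.inr Nat.prime_two
    · exact Or.inr Nat.prime_three
    · exact absurd rfl hne4
  apply le_antisymm
  · -- upper bound
    apply Finset.sup_le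
    intro s _
    split
    · rename_i hind
      by_cases hA : ∃ i : ZMod (2 * n), a i ∈ s
      · by_cases hX : ∃ j : ZMod (2 * n), xa j ∈ s
        · obtain ⟨i, hi⟩ := hA
          obtain ⟨j, hj⟩ := hX
          exact absurd (hadj i j) (hind hi hj (by simp))
        · -- s ⊆ image a univ
          have hsub : s ⊆ Finset.univ.image (a : ZMod (2 * n) → QuaternionGroup n) := by
            intro x hx
            cases x with
            | a i => simp
            | xa j => exact absurd ⟨j, hx⟩ hX
          calc s.card ≤ _ := Finset.card_le_card hsub
            _ ≤ Fintype.card (ZMod (2 * n)) := Finset.card_image_le.trans (by simp)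
            _ = 2 * n := hcard
      · have hsub : s ⊆ Finset.univ.image (xa : ZMod (2 * n) → QuaternionGroup n) := by
          intro x hx
          cases x with
          | a i => exact absurd ⟨i, hx⟩ hA
          | xa j => simp
        calc s.card ≤ _ := Finset.card_le_card hsub
          _ ≤ Fintype.card (ZMod (2 * n)) := Finset.card_image_le.trans (by simp)
          _ = 2 * n := hcard
    · omega
  · -- lower bound: the set of all xa j
    have hinj : Function.Injective (xa : ZMod (2 * n) → QuaternionGroup n) := by
      intro i j h; injection h
    have hind : IsIndepSet (primeCoprimeGraph (QuaternionGroup n))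
        ((Finset.univ.image (xa : ZMod (2 * n) → QuaternionGroup n)) : Set (QuaternionGroup n)) := by
      intro x hx y hy hxy hadj'
      simp only [Finset.coe_image, Set.mem_image, Finset.coe_univ, Set.image_univ,
        Set.mem_range] at hx hy
      obtain ⟨i, rfl⟩ := hx
      obtain ⟨j, rfl⟩ := hy
      rcases hadj'.2 with h | h <;>
        rw [QuaternionGroup.orderOf_xa, QuaternionGroup.orderOf_xa] at h <;> norm_num at h
    have := Finset.le_sup (f := fun s : Finset (QuaternionGroup n) =>
        if IsIndepSet (primeCoprimeGraph (QuaternionGroup n)) (s : Set (QuaternionGroup n))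
        then s.card else 0)
      (Finset.mem_univ (Finset.univ.image (xa : ZMod (2 * n) → QuaternionGroup n)))
    rw [if_pos hind, Finset.card_image_of_injective _ hinj, Finset.card_univ, hcard] at this
    unfold indepNum
    exact this
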